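/- For every integer ℓ ≥ 0, 2·r_{1,ℓ} = r_ℓ + r_{ℓ+1}, i.e., the number of barred preferential arrangements of [ℓ] with one bar equals (r_ℓ + r_{ℓ+1})/2. -/

import Mathlib

/-- `IsBPA m ℓ f` : `f` encodes a barred preferential arrangement of `[ℓ]` with `m` bars.
Each element of `[ℓ]` is assigned a section (one of the `m + 1` sections determined by the
`m` bars) together with a rank inside its section (ties are allowed: elements of the same
section with the same rank form a block); within each section the set of ranks actually used
must be an initial segment `{0, …, t-1}`, so that `f` determines, for each section, an
ordered partition of the elements assigned to it into nonempty blocks. -/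
def IsBPA (m ℓ : ℕ) (f : Fin ℓ → Fin (m + 1) × Fin ℓ) : Prop :=
  ∀ x : Fin ℓ, ∀ r : Fin ℓ, r < (f x).2 → ∃ y : Fin ℓ, (f y).1 = (f x).1 ∧ (f y).2 = r

instance (m ℓ : ℕ) : DecidablePred (IsBPA m ℓ) := fun f => by unfold IsBPA; infer_instance

/-- `bpa m ℓ` : the number of barred preferential arrangements of `[ℓ]` with `m` bars.
In particular `bpa 0 ℓ` is the number of preferential arrangements of `[ℓ]`
(the Fubini / ordered Bell number `r_ℓ`). -/
def bpa (m ℓ : ℕ) : ℕ :=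
  Fintype.card { f : Fin ℓ → Fin (m + 1) × Fin ℓ // IsBPA m ℓ f }

open Finset Function

/-- number of ranks used in section `i` -/
def cnt {m ℓ : ℕ} (i : Fin (m + 1)) (f : Fin ℓ → Fin (m + 1) × Fin ℓ) : ℕ :=
  ((univ.filter fun x => (f x).1 = i).image fun x => ((f x).2 : ℕ)).card

lemma used_eq_range {m ℓ : ℕ} {f : Fin ℓ → Fin (m + 1) × Fin ℓ} (h : IsBPA m ℓ f)
    (i : Fin (m + 1)) :
    ((univ.filter fun x => (f x).1 = i).image fun x => ((f x).2 : ℕ))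
      = Finset.range (cnt i f) := by
  set U := ((univ.filter fun x => (f x).1 = i).image fun x => ((f x).2 : ℕ)) with hU
  have hdc : ∀ a ∈ U, ∀ b : ℕ, b < a → b ∈ U := by
    intro a ha b hb
    simp only [hU, mem_image, mem_filter, mem_univ, true_and] at ha ⊢
    obtain ⟨x, hxi, hxa⟩ := ha
    have hbl : b < ℓ := by have := (f x).2.isLt; omega
    obtain ⟨y, hy1, hy2⟩ := h x ⟨b, hbl⟩ (by rw [Fin.lt_def]; simp; omega)
    refine ⟨y, by rw [hy1, hxi], by rw [hy2]⟩
  have hsub : U ⊆ Finset.range U.card := by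
    intro a ha
    rw [mem_range]
    have hr : Finset.range (a + 1) ⊆ U := by
      intro b hb
      rw [mem_range] at hb
      rcases Nat.lt_succ_iff_lt_or_eq.1 hb with hlt | rfl
      · exact hdc a ha b hlt
      · exact ha
    have := card_le_card hr
    rw [card_range] at this
    omega
  have hc : cnt i f = U.card := rfl
  rw [hc]
  exact eq_of_subset_of_card_le hsub (by rw [card_range])

lemma mem_cnt_iff {m ℓ : ℕ} {f : Fin ℓ → Fin (m + 1) × Fin ℓ} (h : IsBPA m ℓ f)
    (i : Fin (m + 1)) (a : ℕ) :
    (∃ x, (f x).1 = i ∧ ((f x).2 : ℕ) = a) ↔ a < cnt i f := by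
  have := used_eq_range h i
  rw [← mem_range, ← this]
  simp [mem_image]

lemma rank_lt_cnt {m ℓ : ℕ} {f : Fin ℓ → Fin (m + 1) × Fin ℓ} (h : IsBPA m ℓ f) (x : Fin ℓ) :
    ((f x).2 : ℕ) < cnt ((f x).1) f :=
  (mem_cnt_iff h _ _).1 ⟨x, rfl, rfl⟩

lemma cnt_eq_of {m ℓ : ℕ} (i : Fin (m + 1)) (f : Fin ℓ → Fin (m + 1) × Fin ℓ) (c : ℕ)
    (h : ∀ a : ℕ, (∃ x, (f x).1 = i ∧ ((f x).2 : ℕ) = a) ↔ a < c) : cnt i f = c := by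
  have key : ((univ.filter fun x => (f x).1 = i).image fun x => ((f x).2 : ℕ))
      = Finset.range c := by
    ext a
    simp only [mem_image, mem_filter, mem_univ, true_and, mem_range]
    constructor
    · rintro ⟨x, hx1, hx2⟩; exact (h a).1 ⟨x, hx1, hx2⟩
    · intro ha; obtain ⟨x, h1, h2⟩ := (h a).2 ha; exact ⟨x, h1, h2⟩
  rw [cnt, key, card_range]

lemma cnt_le {m ℓ : ℕ} (i : Fin (m + 1)) (f : Fin ℓ → Fin (m + 1) × Fin ℓ) :
    cnt i f ≤ (univ.filter fun x => (f x).1 = i).card := card_image_le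

lemma cnt01_le {ℓ : ℕ} (f : Fin ℓ → Fin 2 × Fin ℓ) : cnt 0 f + cnt 1 f ≤ ℓ := by
  have h0 := cnt_le 0 f
  have h1 := cnt_le 1 f
  have key := card_filter_add_card_filter_not (s := (univ : Finset (Fin ℓ)))
    (p := fun x => (f x).1 = 0)
  have heq : (univ.filter fun x => ¬ (f x).1 = 0) = (univ.filter fun x => (f x).1 = 1) := by
    apply filter_congr
    intro x _
    have := (f x).1.isLt
    simp only [Fin.ext_iff, eq_iff_iff]
    constructor <;> (intro hh; omega)
  rw [heq] at key
  have := card_univ (α := Fin ℓ)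
  simp only [Fintype.card_fin] at this
  omega

lemma cnt0_le {ℓ : ℕ} (f : Fin ℓ → Fin 1 × Fin ℓ) : cnt 0 f ≤ ℓ := by
  have h0 := cnt_le 0 f
  have : (univ.filter fun x => (f x).1 = 0).card ≤ (univ : Finset (Fin ℓ)).card :=
    card_le_card (filter_subset _ _)
  simp only [card_univ, Fintype.card_fin] at this
  omega

/-- Finset of surjections `Fin n → Fin t`. -/
def SurjF (n t : ℕ) : Finset (Fin n → Fin t) :=
  univ.filter (fun g => ∀ y, ∃ x, g x = y)

/-- Number of surjections `Fin n → Fin t`. -/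
def Surj (n t : ℕ) : ℕ := (SurjF n t).card

lemma mem_SurjF {n t : ℕ} {g : Fin n → Fin t} : g ∈ SurjF n t ↔ ∀ y, ∃ x, g x = y := by
  simp [SurjF]

lemma surj_eq_zero_of_lt {n t : ℕ} (h : n < t) : Surj n t = 0 := by
  unfold Surj SurjF
  rw [Finset.card_eq_zero, Finset.filter_eq_empty_iff]
  intro g _ hg
  have : Fintype.card (Fin t) ≤ Fintype.card (Fin n) :=
    Fintype.card_le_of_surjective g hg
  simp at this; omega

lemma surj_succ_zero (n : ℕ) : Surj (n + 1) 0 = 0 := by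
  unfold Surj SurjF
  rw [Finset.card_eq_zero, Finset.filter_eq_empty_iff]
  intro g _
  exact (g 0).elim0

lemma surj_succ (n t : ℕ) :
    Surj (n + 1) (t + 1) = (t + 1) * Surj n (t + 1) + (t + 1) * Surj n t := by
  classical
  have key := card_filter_add_card_filter_not
    (s := SurjF (n + 1) (t + 1)) (p := fun f => ∀ y, ∃ x, f (Fin.castSucc x) = y)
  -- Part A : restriction surjective
  have hA : ((SurjF (n + 1) (t + 1)).filter
      (fun f => ∀ y, ∃ x, f (Fin.castSucc x) = y)).card
      = (t + 1) * Surj n (t + 1) := by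
    have : ((SurjF (n + 1) (t + 1)).filter
        (fun f => ∀ y, ∃ x, f (Fin.castSucc x) = y)).card
        = ((univ : Finset (Fin (t + 1))) ×ˢ SurjF n (t + 1)).card := by
      refine card_nbij' (fun f => (f (Fin.last n), f ∘ Fin.castSucc))
        (fun p => Fin.snoc p.2 p.1) ?_ ?_ ?_ ?_
      · intro f hf
        rw [mem_coe, mem_filter] at hf
        rw [mem_coe, mem_product]
        exact ⟨mem_univ _, mem_SurjF.2 fun y => (hf.2 y).imp fun x hx => hx⟩
      · intro p hp
        rw [mem_coe, mem_product, mem_SurjF] at hp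
        rw [mem_coe, mem_filter, mem_SurjF]
        constructor
        · intro y
          obtain ⟨x, hx⟩ := hp.2 y
          exact ⟨Fin.castSucc x, by simp [hx]⟩
        · intro y
          obtain ⟨x, hx⟩ := hp.2 y
          exact ⟨x, by simp [hx]⟩
      · intro f hf
        funext x
        induction x using Fin.lastCases with
        | last => simp
        | cast i => simp
      · intro p hp
        refine Prod.ext ?_ ?_
        · simp
        · funext x; simp
    rw [this, card_product]; simp [Surj]
  -- Part B : restriction not surjective
  have hB : ((SurjF (n + 1) (t + 1)).filter
      (fun f => ¬ ∀ y, ∃ x, f (Fin.castSucc x) = y)).card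
      = (t + 1) * Surj n t := by
    have : ((univ : Finset (Fin (t + 1))) ×ˢ SurjF n t).card
        = ((SurjF (n + 1) (t + 1)).filter
            (fun f => ¬ ∀ y, ∃ x, f (Fin.castSucc x) = y)).card := by
      refine card_nbij (fun p => Fin.snoc (fun x => p.1.succAbove (p.2 x)) p.1) ?_ ?_ ?_
      · intro p hp
        rw [mem_coe, mem_product, mem_SurjF] at hp
        rw [mem_coe, mem_filter, mem_SurjF]
        refine ⟨?_, ?_⟩
        · intro y
          by_cases hy : y = p.1
          · exact ⟨Fin.last n, by simp [hy]⟩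
          · obtain ⟨u, hu⟩ := Fin.exists_succAbove_eq hy
            obtain ⟨x, hx⟩ := hp.2 u
            exact ⟨Fin.castSucc x, by simp [hx, hu]⟩
        · intro hcon
          obtain ⟨x, hx⟩ := hcon p.1
          simp only [Fin.snoc_castSucc] at hx
          exact Fin.succAbove_ne p.1 (p.2 x) hx
      · intro p hp q hq hpq
        simp only at hpq
        have h1 : p.1 = q.1 := by
          have := congrFun hpq (Fin.last n)
          simpa using this
        have h2 : p.2 = q.2 := by
          funext x
          have := congrFun hpq (Fin.castSucc x)
          simp only [Fin.snoc_castSucc, h1] at this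
          exact Fin.succAbove_right_injective this
        exact Prod.ext h1 h2
      · intro f hf
        simp only [coe_filter, Set.mem_setOf_eq, mem_SurjF] at hf
        obtain ⟨hsurj, hnot⟩ := hf
        set v := f (Fin.last n) with hv
        have hmiss : ∀ x : Fin n, f (Fin.castSucc x) ≠ v := by
          push_neg at hnot
          obtain ⟨w, hw⟩ := hnot
          have hwv : w = v := by
            obtain ⟨z, hz⟩ := hsurj w
            rcases Fin.eq_castSucc_or_eq_last z with ⟨j, rfl⟩ | rfl
            · exact absurd hz (hw j)
            · rw [← hz, hv]
          intro x hx
          exact hw x (hx.trans hwv.symm)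
        choose g hgspec using fun x => Fin.exists_succAbove_eq (hmiss x)
        refine ⟨(v, g), ?_, ?_⟩
        · simp only [coe_product, Set.mem_prod, Set.mem_univ, true_and, mem_coe, mem_SurjF]
          refine ⟨mem_univ _, ?_⟩
          intro u
          obtain ⟨z, hz⟩ := hsurj (v.succAbove u)
          have hz' : z ≠ Fin.last n := by
            intro h; rw [h, ← hv] at hz
            exact Fin.succAbove_ne v u hz.symm
          obtain ⟨x, rfl⟩ : ∃ x, Fin.castSucc x = z := by
            rcases Fin.eq_castSucc_or_eq_last z with ⟨j, rfl⟩ | rfl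
            · exact ⟨j, rfl⟩
            · exact absurd rfl hz'
          refine ⟨x, Fin.succAbove_right_injective (p := v) ?_⟩
          rw [hgspec x, hz]
        · funext z
          induction z using Fin.lastCases with
          | last => simp [hv]
          | cast i => simp [hgspec i]
    rw [← this, card_product]; simp [Surj]
  rw [Surj, ← key, hA, hB]

lemma bpa_zero_eq (ℓ : ℕ) : bpa 0 ℓ = ∑ k ∈ Finset.range (ℓ + 1), Surj ℓ k := by
  classical
  rw [bpa, Fintype.card_subtype]
  rw [card_eq_sum_card_fiberwise (f := fun f => cnt 0 f) (t := Finset.range (ℓ + 1))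
    (fun f _ => mem_range.2 (Nat.lt_succ_of_le (cnt0_le f)))]
  apply sum_congr rfl
  intro k hk
  rw [mem_range] at hk
  rcases Nat.eq_zero_or_pos k with rfl | hk0
  · rcases Nat.eq_zero_or_pos ℓ with rfl | hl0
    · decide
    · have hz : Surj ℓ 0 = 0 := by
        obtain ⟨n, rfl⟩ := Nat.exists_eq_succ_of_ne_zero (Nat.pos_iff_ne_zero.1 hl0)
        exact surj_succ_zero n
      rw [hz, card_eq_zero, filter_eq_empty_iff]
      intro f hf
      rw [mem_filter] at hf
      have hB : IsBPA 0 ℓ f := hf.2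
      have := rank_lt_cnt hB ⟨0, hl0⟩
      rw [Fin.eq_zero ((f ⟨0, hl0⟩).1)] at this
      omega
  · have htl : k ≤ ℓ := by omega
    refine card_nbij'
      (fun f => fun x => (⟨min ((f x).2 : ℕ) (k - 1),
        lt_of_le_of_lt (Nat.min_le_right _ _) (by omega)⟩ : Fin k))
      (fun g => fun x => ((0 : Fin 1), Fin.castLE htl (g x))) ?_ ?_ ?_ ?_
    · intro f hf
      simp only [mem_coe, mem_filter] at hf
      obtain ⟨⟨-, hB⟩, hc⟩ := hf
      rw [mem_coe, mem_SurjF]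
      intro y
      have hy : (y : ℕ) < cnt 0 f := by rw [hc]; exact y.isLt
      obtain ⟨x, _, hx2⟩ := (mem_cnt_iff hB 0 (y : ℕ)).2 hy
      refine ⟨x, Fin.ext ?_⟩
      simp only
      rw [hx2]
      exact Nat.min_eq_left (by omega)
    · intro g hg
      rw [mem_coe, mem_SurjF] at hg
      have hB : IsBPA 0 ℓ (fun x => ((0 : Fin 1), Fin.castLE htl (g x))) := by
        intro x r hr
        simp only [Fin.lt_def, Fin.coe_castLE] at hr
        obtain ⟨z, hz⟩ := hg ⟨(r : ℕ), lt_of_lt_of_le (lt_of_lt_of_le hr (Nat.le_of_lt_succ (Nat.lt_succ_of_lt (g x).isLt))) le_rfl⟩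
        exact ⟨z, rfl, Fin.ext (by simp [hz])⟩
      have hc : cnt 0 (fun x => ((0 : Fin 1), Fin.castLE htl (g x))) = k := by
        apply cnt_eq_of
        intro a
        constructor
        · rintro ⟨x, -, hx⟩
          simp only [Fin.coe_castLE] at hx
          rw [← hx]; exact (g x).isLt
        · intro ha
          obtain ⟨z, hz⟩ := hg ⟨a, ha⟩
          exact ⟨z, rfl, by simp [hz]⟩
      rw [mem_coe, mem_filter, mem_filter]
      exact ⟨⟨mem_univ _, hB⟩, hc⟩
    · intro f hf
      simp only [mem_coe, mem_filter] at hf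
      obtain ⟨⟨-, hB⟩, hc⟩ := hf
      funext x
      refine Prod.ext (Fin.eq_zero _).symm (Fin.ext ?_)
      simp only [Fin.coe_castLE]
      have := rank_lt_cnt hB x
      rw [Fin.eq_zero ((f x).1), hc] at this
      exact Nat.min_eq_left (by omega)
    · intro g hg
      funext x
      refine Fin.ext ?_
      simp only [Fin.coe_castLE]
      exact Nat.min_eq_left (by have := (g x).isLt; omega)

section BpaOne

variable {ℓ k : ℕ}

/-- decode: from a split point `s` and a surjection `g : Fin ℓ → Fin k`, build a
barred preferential arrangement with one bar. -/
def Jmap (htl : k ≤ ℓ) (s : ℕ) (g : Fin ℓ → Fin k) : Fin ℓ → Fin 2 × Fin ℓ :=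
  fun x =>
    if (g x : ℕ) < s then ((0 : Fin 2), Fin.castLE htl (g x))
    else ((1 : Fin 2), ⟨(g x : ℕ) - s,
      lt_of_le_of_lt (Nat.sub_le _ _) (lt_of_lt_of_le (g x).isLt htl)⟩)

lemma Jmap_fst_eq_zero_iff (htl : k ≤ ℓ) (s : ℕ) (g : Fin ℓ → Fin k) (x : Fin ℓ) :
    (Jmap htl s g x).1 = 0 ↔ (g x : ℕ) < s := by
  unfold Jmap
  by_cases h : (g x : ℕ) < s <;> simp [h]

lemma Jmap_snd_of_lt (htl : k ≤ ℓ) (s : ℕ) (g : Fin ℓ → Fin k) (x : Fin ℓ)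
    (h : (g x : ℕ) < s) : ((Jmap htl s g x).2 : ℕ) = (g x : ℕ) := by
  unfold Jmap; simp [h]

lemma Jmap_snd_of_ge (htl : k ≤ ℓ) (s : ℕ) (g : Fin ℓ → Fin k) (x : Fin ℓ)
    (h : ¬ (g x : ℕ) < s) : ((Jmap htl s g x).2 : ℕ) = (g x : ℕ) - s := by
  unfold Jmap; simp [h]

lemma Jmap_fst_eq_one_iff (htl : k ≤ ℓ) (s : ℕ) (g : Fin ℓ → Fin k) (x : Fin ℓ) :
    (Jmap htl s g x).1 = 1 ↔ ¬ (g x : ℕ) < s := by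
  unfold Jmap
  by_cases h : (g x : ℕ) < s <;> simp [h]

lemma cnt0_Jmap (htl : k ≤ ℓ) {s : ℕ} {g : Fin ℓ → Fin k} (hs : s ≤ k)
    (hg : ∀ y, ∃ x, g x = y) : cnt 0 (Jmap htl s g) = s := by
  apply cnt_eq_of
  intro a
  constructor
  · rintro ⟨x, hx1, hx2⟩
    have h := (Jmap_fst_eq_zero_iff htl s g x).1 hx1
    rw [Jmap_snd_of_lt htl s g x h] at hx2
    omega
  · intro ha
    obtain ⟨z, hz⟩ := hg ⟨a, by omega⟩
    have hza : (g z : ℕ) = a := by rw [hz]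
    have h : (g z : ℕ) < s := by omega
    exact ⟨z, (Jmap_fst_eq_zero_iff htl s g z).2 h,
      by rw [Jmap_snd_of_lt htl s g z h]; omega⟩

lemma cnt1_Jmap (htl : k ≤ ℓ) {s : ℕ} {g : Fin ℓ → Fin k} (hs : s ≤ k)
    (hg : ∀ y, ∃ x, g x = y) : cnt 1 (Jmap htl s g) = k - s := by
  apply cnt_eq_of
  intro a
  constructor
  · rintro ⟨x, hx1, hx2⟩
    have h := (Jmap_fst_eq_one_iff htl s g x).1 hx1
    rw [Jmap_snd_of_ge htl s g x h] at hx2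
    have := (g x).isLt
    omega
  · intro ha
    obtain ⟨z, hz⟩ := hg ⟨a + s, by omega⟩
    have hza : (g z : ℕ) = a + s := by rw [hz]
    have h : ¬ (g z : ℕ) < s := by omega
    exact ⟨z, (Jmap_fst_eq_one_iff htl s g z).2 h,
      by rw [Jmap_snd_of_ge htl s g z h]; omega⟩

lemma isBPA_Jmap (htl : k ≤ ℓ) {s : ℕ} {g : Fin ℓ → Fin k} (hs : s ≤ k)
    (hg : ∀ y, ∃ x, g x = y) : IsBPA 1 ℓ (Jmap htl s g) := by
  intro x r hr
  by_cases h : (g x : ℕ) < s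
  · have hx2 := Jmap_snd_of_lt htl s g x h
    have hrv : (r : ℕ) < (g x : ℕ) := by
      rw [Fin.lt_def, hx2] at hr; exact hr
    obtain ⟨z, hz⟩ := hg ⟨(r : ℕ), by have := (g x).isLt; omega⟩
    have hzv : (g z : ℕ) = (r : ℕ) := by rw [hz]
    have hzlt : (g z : ℕ) < s := by omega
    refine ⟨z, ?_, ?_⟩
    · rw [(Jmap_fst_eq_zero_iff htl s g z).2 hzlt,
        (Jmap_fst_eq_zero_iff htl s g x).2 h]
    · exact Fin.ext (by rw [Jmap_snd_of_lt htl s g z hzlt]; omega)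
  · have hx2 := Jmap_snd_of_ge htl s g x h
    have hrv : (r : ℕ) < (g x : ℕ) - s := by
      rw [Fin.lt_def, hx2] at hr; exact hr
    obtain ⟨z, hz⟩ := hg ⟨(r : ℕ) + s, by have := (g x).isLt; omega⟩
    have hzv : (g z : ℕ) = (r : ℕ) + s := by rw [hz]
    have hzge : ¬ (g z : ℕ) < s := by omega
    refine ⟨z, ?_, ?_⟩
    · rw [(Jmap_fst_eq_one_iff htl s g z).2 hzge,
        (Jmap_fst_eq_one_iff htl s g x).2 h]
    · exact Fin.ext (by rw [Jmap_snd_of_ge htl s g z hzge]; omega)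

/-- encode: from a barred preferential arrangement with one bar, build a function to
`Fin k`. -/
def Imap (hk0 : 0 < k) (f : Fin ℓ → Fin 2 × Fin ℓ) : Fin ℓ → Fin k :=
  fun x => ⟨min (((f x).2 : ℕ) + (if (f x).1 = 0 then 0 else cnt 0 f)) (k - 1),
    lt_of_le_of_lt (Nat.min_le_right _ _) (by omega)⟩

lemma Imap_val (hk0 : 0 < k) (f : Fin ℓ → Fin 2 × Fin ℓ) (x : Fin ℓ) :
    ((Imap hk0 f x : Fin k) : ℕ)
      = min (((f x).2 : ℕ) + (if (f x).1 = 0 then 0 else cnt 0 f)) (k - 1) := rfl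

lemma fin2_cases (a : Fin 2) : a = 0 ∨ a = 1 := by omega

lemma Imap_val_of_zero (hk0 : 0 < k) {f : Fin ℓ → Fin 2 × Fin ℓ} (hB : IsBPA 1 ℓ f)
    (hc : cnt 0 f + cnt 1 f = k) {x : Fin ℓ} (hx : (f x).1 = 0) :
    ((Imap hk0 f x : Fin k) : ℕ) = ((f x).2 : ℕ) := by
  have hlt := rank_lt_cnt hB x
  rw [hx] at hlt
  rw [Imap_val, if_pos hx]
  omega

lemma Imap_val_of_one (hk0 : 0 < k) {f : Fin ℓ → Fin 2 × Fin ℓ} (hB : IsBPA 1 ℓ f)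
    (hc : cnt 0 f + cnt 1 f = k) {x : Fin ℓ} (hx : (f x).1 = 1) :
    ((Imap hk0 f x : Fin k) : ℕ) = ((f x).2 : ℕ) + cnt 0 f := by
  have hlt := rank_lt_cnt hB x
  rw [hx] at hlt
  rw [Imap_val, if_neg (by rw [hx]; decide)]
  omega

end BpaOne

lemma bpa_one_eq (ℓ : ℕ) :
    bpa 1 ℓ = ∑ k ∈ Finset.range (ℓ + 1), (k + 1) * Surj ℓ k := by
  classical
  rw [bpa, Fintype.card_subtype]
  rw [card_eq_sum_card_fiberwise (f := fun f => cnt 0 f + cnt 1 f)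
    (t := Finset.range (ℓ + 1))
    (fun f _ => mem_range.2 (Nat.lt_succ_of_le (cnt01_le f)))]
  apply sum_congr rfl
  intro k hk
  rw [mem_range] at hk
  rcases Nat.eq_zero_or_pos k with rfl | hk0
  · rcases Nat.eq_zero_or_pos ℓ with rfl | hl0
    · decide
    · have hz : Surj ℓ 0 = 0 := by
        obtain ⟨n, rfl⟩ := Nat.exists_eq_succ_of_ne_zero (Nat.pos_iff_ne_zero.1 hl0)
        exact surj_succ_zero n
      rw [hz, Nat.mul_zero, card_eq_zero, filter_eq_empty_iff]
      intro f hf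
      rw [mem_filter] at hf
      have hB : IsBPA 1 ℓ f := hf.2
      have hlt := rank_lt_cnt hB ⟨0, hl0⟩
      rcases fin2_cases ((f ⟨0, hl0⟩).1) with h | h <;> rw [h] at hlt <;> omega
  · have htl : k ≤ ℓ := by omega
    have hcard : ((univ.filter (IsBPA 1 ℓ)).filter
        (fun f => cnt 0 f + cnt 1 f = k)).card
        = ((Finset.range (k + 1)) ×ˢ SurjF ℓ k).card := by
      refine card_nbij' (fun f => (cnt 0 f, Imap hk0 f))
        (fun p => Jmap htl p.1 p.2) ?_ ?_ ?_ ?_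
      · -- forward maps into target
        intro f hf
        simp only [mem_coe, mem_filter] at hf
        obtain ⟨⟨-, hB⟩, hc⟩ := hf
        dsimp only
        rw [mem_coe, mem_product, mem_range, mem_SurjF]
        refine ⟨by omega, ?_⟩
        intro y
        by_cases hy : (y : ℕ) < cnt 0 f
        · obtain ⟨x, hx1, hx2⟩ := (mem_cnt_iff hB 0 (y : ℕ)).2 hy
          refine ⟨x, Fin.ext ?_⟩
          rw [Imap_val_of_zero hk0 hB hc hx1, hx2]
        · have hy2 : (y : ℕ) - cnt 0 f < cnt 1 f := by have := y.isLt; omega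
          obtain ⟨x, hx1, hx2⟩ := (mem_cnt_iff hB 1 _).2 hy2
          refine ⟨x, Fin.ext ?_⟩
          rw [Imap_val_of_one hk0 hB hc hx1, hx2]
          omega
      · -- backward maps into source
        intro p hp
        rw [mem_coe, mem_product, mem_range, mem_SurjF] at hp
        obtain ⟨hs, hg⟩ := hp
        have hs' : p.1 ≤ k := by omega
        rw [mem_coe, mem_filter, mem_filter]
        refine ⟨⟨mem_univ _, isBPA_Jmap htl hs' hg⟩, ?_⟩
        rw [cnt0_Jmap htl hs' hg, cnt1_Jmap htl hs' hg]
        omega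
      · -- left inverse
        intro f hf
        simp only [mem_coe, mem_filter] at hf
        obtain ⟨⟨-, hB⟩, hc⟩ := hf
        funext x
        rcases fin2_cases ((f x).1) with h | h
        · have hv := Imap_val_of_zero hk0 hB hc h
          have hlt := rank_lt_cnt hB x
          rw [h] at hlt
          have hcond : ((Imap hk0 f x : Fin k) : ℕ) < cnt 0 f := by rw [hv]; omega
          refine Prod.ext ?_ (Fin.ext ?_)
          · rw [(Jmap_fst_eq_zero_iff htl (cnt 0 f) (Imap hk0 f) x).2 hcond, h]
          · rw [Jmap_snd_of_lt htl (cnt 0 f) (Imap hk0 f) x hcond, hv]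
        · have hv := Imap_val_of_one hk0 hB hc h
          have hcond : ¬ ((Imap hk0 f x : Fin k) : ℕ) < cnt 0 f := by rw [hv]; omega
          refine Prod.ext ?_ (Fin.ext ?_)
          · rw [(Jmap_fst_eq_one_iff htl (cnt 0 f) (Imap hk0 f) x).2 hcond, h]
          · rw [Jmap_snd_of_ge htl (cnt 0 f) (Imap hk0 f) x hcond, hv]
            omega
      · -- right inverse
        intro p hp
        rw [mem_coe, mem_product, mem_range, mem_SurjF] at hp
        obtain ⟨hs, hg⟩ := hp
        have hs' : p.1 ≤ k := by omega
        have hc0 := cnt0_Jmap htl hs' hg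
        have hc1 := cnt1_Jmap htl hs' hg
        have hB := isBPA_Jmap htl hs' hg
        refine Prod.ext hc0 ?_
        funext x
        refine Fin.ext ?_
        by_cases h : (p.2 x : ℕ) < p.1
        · have h1 := (Jmap_fst_eq_zero_iff htl p.1 p.2 x).2 h
          rw [Imap_val_of_zero hk0 hB (by omega) h1,
            Jmap_snd_of_lt htl p.1 p.2 x h]
        · have h1 := (Jmap_fst_eq_one_iff htl p.1 p.2 x).2 h
          rw [Imap_val_of_one hk0 hB (by omega) h1, hc0,
            Jmap_snd_of_ge htl p.1 p.2 x h]
          omega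
    rw [hcard, card_product, card_range, Surj]

/-- For every `ℓ ≥ 0`, `2 · r_{1,ℓ} = r_ℓ + r_{ℓ+1}`. -/
theorem two_mul_bpa_one (ℓ : ℕ) :
    2 * bpa 1 ℓ = bpa 0 ℓ + bpa 0 (ℓ + 1) := by
  rw [bpa_one_eq, bpa_zero_eq, bpa_zero_eq]
  have h1 : ∑ k ∈ Finset.range (ℓ + 2), Surj (ℓ + 1) k
      = ∑ k ∈ Finset.range (ℓ + 1), ((k + 1) * Surj ℓ (k + 1) + (k + 1) * Surj ℓ k) := by
    rw [Finset.sum_range_succ' (fun k => Surj (ℓ + 1) k) (ℓ + 1), surj_succ_zero, add_zero]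
    exact Finset.sum_congr rfl (fun k _ => surj_succ ℓ k)
  have h2 : ∑ k ∈ Finset.range (ℓ + 1), (k + 1) * Surj ℓ (k + 1)
      = ∑ k ∈ Finset.range (ℓ + 1), k * Surj ℓ k := by
    have e1 := Finset.sum_range_succ' (fun k => k * Surj ℓ k) (ℓ + 1)
    have e2 := Finset.sum_range_succ (fun k => k * Surj ℓ k) (ℓ + 1)
    rw [surj_eq_zero_of_lt (Nat.lt_succ_self ℓ)] at e2
    simp only [Nat.zero_mul, add_zero, Nat.mul_zero] at e1 e2
    omega
  have h3 : ∑ k ∈ Finset.range (ℓ + 1), (k + 1) * Surj ℓ k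
      = ∑ k ∈ Finset.range (ℓ + 1), k * Surj ℓ k
        + ∑ k ∈ Finset.range (ℓ + 1), Surj ℓ k := by
    rw [← Finset.sum_add_distrib]
    exact Finset.sum_congr rfl (fun k _ => by ring)
  rw [h1, Finset.sum_add_distrib, h2, h3]
  omega
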